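/- arXiv:2508.11066 — 6 statements merged into one kernel-verified Lean document; each statement's English description precedes it below -/
import Mathlib

section
/- If X₊(p) = A·p and X₋(p) = B·p are linear vector fields on ℝ³ with A = (a_{ij}), B = (b_{ij}), h(x,y,z) = (x²+y²+z²+3)² − 16(x²+y²), and ⟨A·p, ∇h(p)⟩ = −⟨B·p, ∇h(p)⟩ for all p with h(p)=0, then b₁₁ = −a₁₁, b₂₂ = −a₂₂, b₃₃ = −a₃₃, b₁₃ = −a₁₃, b₂₃ = −a₂₃, b₁₂ = −a₁₂ − a₂₁ − b₂₁, b₃₁ = −a₃₁, and b₃₂ = −a₃₂. -/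
/-- The standard torus function: its zero set is the torus of major radius 2, minor radius 1. -/
noncomputable def torusFn (x y z : ℝ) : ℝ := (x^2 + y^2 + z^2 + 3)^2 - 16*(x^2 + y^2)

/-- Lie derivative of `torusFn` along the linear vector field given by the matrix
entries `a i j`, i.e. `⟨A·p, ∇h(p)⟩`. -/
noncomputable def lieD (a11 a12 a13 a21 a22 a23 a31 a32 a33 x y z : ℝ) : ℝ :=
  (a11*x + a12*y + a13*z) * (4*x*(x^2 + y^2 + z^2 + 3) - 32*x)
  + (a21*x + a22*y + a23*z) * (4*y*(x^2 + y^2 + z^2 + 3) - 32*y)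
  + (a31*x + a32*y + a33*z) * (4*z*(x^2 + y^2 + z^2 + 3))

set_option maxHeartbeats 2000000 in
theorem inelastic_matrix_constraints
    (a11 a12 a13 a21 a22 a23 a31 a32 a33 : ℝ)
    (b11 b12 b13 b21 b22 b23 b31 b32 b33 : ℝ)
    (hin : ∀ x y z : ℝ, torusFn x y z = 0 →
      lieD a11 a12 a13 a21 a22 a23 a31 a32 a33 x y z =
        - lieD b11 b12 b13 b21 b22 b23 b31 b32 b33 x y z) :
    b11 = -a11 ∧ b22 = -a22 ∧ b33 = -a33 ∧ b13 = -a13 ∧ b23 = -a23 ∧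
    b12 = -a12 - a21 - b21 ∧ b31 = -a31 ∧ b32 = -a32 := by
  have h0 := hin (3) (0) (0) (by norm_num [torusFn])
  norm_num [lieD] at h0
  have h1 := hin (0) (3) (0) (by norm_num [torusFn])
  norm_num [lieD] at h1
  have h2 := hin (2) (0) (1) (by norm_num [torusFn])
  norm_num [lieD] at h2
  have h3 := hin (2) (0) (-1) (by norm_num [torusFn])
  norm_num [lieD] at h3
  have h4 := hin (0) (2) (1) (by norm_num [torusFn])
  norm_num [lieD] at h4
  have h5 := hin (0) (2) (-1) (by norm_num [torusFn])
  norm_num [lieD] at h5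
  have h6 := hin (13/5) (0) (4/5) (by norm_num [torusFn])
  norm_num [lieD] at h6
  have h7 := hin (13/5) (0) (-4/5) (by norm_num [torusFn])
  norm_num [lieD] at h7
  have h8 := hin (0) (13/5) (4/5) (by norm_num [torusFn])
  norm_num [lieD] at h8
  have h9 := hin (0) (13/5) (-4/5) (by norm_num [torusFn])
  norm_num [lieD] at h9
  have h10 := hin (39/25) (52/25) (4/5) (by norm_num [torusFn])
  norm_num [lieD] at h10
  refine ⟨?_, ?_, ?_, ?_, ?_, ?_, ?_, ?_⟩ <;> linarith
end

section
/- Let X₊(p) = A·p and X₋(p) = B·p be linear vector fields on ℝ³ satisfying the inelastic condition over the torus h⁻¹(0), where h(x,y,z) = (x²+y²+z²+3)² − 16(x²+y²). Then the Filippov sliding vector field on the torus equals Z^s(x,y,z) = ½(X₊ + X₋)(x,y,z) = (−½(a₂₁+b₂₁)y, ½(a₂₁+b₂₁)x, 0). -/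
theorem sliding_vector_field_formula
    (a11 a12 a13 a21 a22 a23 a31 a32 a33 : ℝ)
    (b11 b12 b13 b21 b22 b23 b31 b32 b33 : ℝ)
    (hb11 : b11 = -a11) (hb22 : b22 = -a22) (hb33 : b33 = -a33)
    (hb13 : b13 = -a13) (hb23 : b23 = -a23)
    (hb12 : b12 = -a12 - a21 - b21) (hb31 : b31 = -a31) (hb32 : b32 = -a32)
    (hin : ∀ x y z : ℝ, torusFn x y z = 0 →
      lieD a11 a12 a13 a21 a22 a23 a31 a32 a33 x y z =
        - lieD b11 b12 b13 b21 b22 b23 b31 b32 b33 x y z)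
    (x y z : ℝ) (hT : torusFn x y z = 0)
    (hden : lieD b11 b12 b13 b21 b22 b23 b31 b32 b33 x y z
          - lieD a11 a12 a13 a21 a22 a23 a31 a32 a33 x y z ≠ 0) :
    -- the three components of the Filippov sliding vector field
    -- Zˢ = (X₋h · X₊ − X₊h · X₋) / (X₋h − X₊h)
    (let Xph := lieD a11 a12 a13 a21 a22 a23 a31 a32 a33 x y z
     let Xmh := lieD b11 b12 b13 b21 b22 b23 b31 b32 b33 x y z
     let Xp : ℝ × ℝ × ℝ := (a11*x + a12*y + a13*z, a21*x + a22*y + a23*z,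
                            a31*x + a32*y + a33*z)
     let Xm : ℝ × ℝ × ℝ := (b11*x + b12*y + b13*z, b21*x + b22*y + b23*z,
                            b31*x + b32*y + b33*z)
     (Xmh - Xph)⁻¹ • (Xmh • Xp - Xph • Xm) =
        ((1:ℝ)/2) • (Xp + Xm) ∧
     (Xmh - Xph)⁻¹ • (Xmh • Xp - Xph • Xm) =
        (-(1/2)*(a21 + b21)*y, (1/2)*(a21 + b21)*x, 0)) := by
  have E := hin x y z hT
  set A := lieD a11 a12 a13 a21 a22 a23 a31 a32 a33 x y z with hA
  set M := lieD b11 b12 b13 b21 b22 b23 b31 b32 b33 x y z with hM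
  have hM0 : M ≠ 0 := by
    intro h; apply hden; rw [h, E, h]; ring
  simp only []
  rw [E]
  have key : (M - -M)⁻¹ • ((M • ((a11*x + a12*y + a13*z, a21*x + a22*y + a23*z,
      a31*x + a32*y + a33*z) : ℝ × ℝ × ℝ) - (-M) • (b11*x + b12*y + b13*z,
      b21*x + b22*y + b23*z, b31*x + b32*y + b33*z))) =
      ((1:ℝ)/2) • (((a11*x + a12*y + a13*z, a21*x + a22*y + a23*z,
      a31*x + a32*y + a33*z) : ℝ × ℝ × ℝ) + (b11*x + b12*y + b13*z,
      b21*x + b22*y + b23*z, b31*x + b32*y + b33*z)) := by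
    have gen : ∀ p q : ℝ, (M - -M)⁻¹ * (M * p - (-M) * q) = 1/2 * (p+q) := by
      intro p q
      rw [show M - -M = 2*M by ring]
      field_simp
      ring
    simp only [Prod.smul_mk, Prod.mk_sub_mk, Prod.mk_add_mk, smul_eq_mul, Prod.mk.injEq]
    exact ⟨gen _ _, gen _ _, gen _ _⟩
  refine ⟨key, ?_⟩
  rw [key]
  simp only [Prod.smul_mk, Prod.mk_add_mk, smul_eq_mul, Prod.mk.injEq]
  subst hb11 hb22 hb33 hb13 hb23 hb12 hb31 hb32
  refine ⟨by ring, by ring, by ring⟩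
end

section
/- Let A be a 3×3 matrix that is skew-symmetric (so q₄ ≡ 0) and with (a₃₁, a₃₂) ≠ (0,0). Then the tangency set {p ∈ h⁻¹(0) : ⟨A·p, ∇h(p)⟩ = 0} is the union of four disjoint ellipses: the two circles obtained intersecting the torus with z = 0, and the two ellipses obtained intersecting the torus with the plane a₃₁x + a₃₂y = 0. -/
theorem tangency_skew_four_ellipses
    (a12 a13 a21 a23 a31 a32 : ℝ)
    (h12 : a12 = -a21) (h13 : a13 = -a31) (h23 : a23 = -a32)
    (hne : (a31, a32) ≠ (0, 0)) :
    {p : ℝ × ℝ × ℝ | torusFn p.1 p.2.1 p.2.2 = 0 ∧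
        lieD 0 a12 a13 a21 0 a23 a31 a32 0 p.1 p.2.1 p.2.2 = 0} =
      ({p : ℝ × ℝ × ℝ | (p.1^2 + p.2.1^2 = 1 ∧ p.2.2 = 0)} ∪
       {p : ℝ × ℝ × ℝ | (p.1^2 + p.2.1^2 = 9 ∧ p.2.2 = 0)}) ∪
      ({p : ℝ × ℝ × ℝ | torusFn p.1 p.2.1 p.2.2 = 0 ∧
          a31*p.1 + a32*p.2.1 = 0}) := by
  subst h12 h13 h23
  ext ⟨x, y, z⟩
  simp only [Set.mem_setOf_eq, Set.mem_union]
  constructor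
  · rintro ⟨ht, hl⟩
    have key : (32 * z) * (a31 * x + a32 * y) = 0 := by
      rw [← hl]; unfold lieD; ring
    rcases mul_eq_zero.mp key with hz | hpl
    · have hz0 : z = 0 := by linarith [mul_eq_zero.mp hz]
      left
      have ht' : (x^2 + y^2 - 1) * (x^2 + y^2 - 9) = 0 := by
        have := ht
        unfold torusFn at this
        rw [hz0] at this
        nlinarith [this]
      rcases mul_eq_zero.mp ht' with h | h
      · left; exact ⟨by linarith, hz0⟩
      · right; exact ⟨by linarith, hz0⟩
    · right; exact ⟨ht, hpl⟩
  · rintro (( ⟨h1, hz⟩ | ⟨h9, hz⟩) | ⟨ht, hpl⟩)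
    · refine ⟨?_, ?_⟩ <;> [skip; skip] <;>
        · simp only [torusFn, lieD]; rw [hz]; nlinarith [h1]
    · refine ⟨?_, ?_⟩ <;>
        · simp only [torusFn, lieD]; rw [hz]; nlinarith [h9]
    · refine ⟨ht, ?_⟩
      have : lieD 0 (-a21) (-a31) a21 0 (-a32) a31 a32 0 x y z
          = (32 * z) * (a31 * x + a32 * y) := by unfold lieD; ring
      rw [this, hpl, mul_zero]
end

section
/- Let A be a 3×3 matrix with all entries zero except a₁₂ = −a₂₁ and a₁₃, a₂₃ arbitrary (and a₃₁ = a₃₂ = a₃₃ = 0). Then X₊h(x,y,z) = 4(x²+y²+z²−5)(a₁₃xz + a₂₃yz), and hence the tangency set on the torus T² = h⁻¹(0) is the intersection of T² with the union of the sphere x²+y²+z² = 5, the plane z = 0, and the plane a₁₃x + a₂₃y = 0. -/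
theorem tangency_lemma47
    (a12 a13 a21 a23 : ℝ) (h12 : a12 = -a21) :
    (∀ x y z : ℝ,
      lieD 0 a12 a13 a21 0 a23 0 0 0 x y z =
        4*(x^2 + y^2 + z^2 - 5)*(a13*x*z + a23*y*z)) ∧
    {p : ℝ × ℝ × ℝ | torusFn p.1 p.2.1 p.2.2 = 0 ∧
        lieD 0 a12 a13 a21 0 a23 0 0 0 p.1 p.2.1 p.2.2 = 0} =
      {p : ℝ × ℝ × ℝ | torusFn p.1 p.2.1 p.2.2 = 0 ∧
        (p.1^2 + p.2.1^2 + p.2.2^2 = 5 ∨ p.2.2 = 0 ∨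
          a13*p.1 + a23*p.2.1 = 0)} := by
  have key : ∀ x y z : ℝ,
      lieD 0 a12 a13 a21 0 a23 0 0 0 x y z =
        4*(x^2 + y^2 + z^2 - 5)*(a13*x*z + a23*y*z) := by
    intro x y z; simp only [lieD, h12]; ring
  refine ⟨key, ?_⟩
  ext ⟨x, y, z⟩
  simp only [Set.mem_setOf_eq, key]
  constructor
  · rintro ⟨ht, he⟩
    refine ⟨ht, ?_⟩
    rcases mul_eq_zero.1 he with h | h
    · rcases mul_eq_zero.1 h with h | h
      · norm_num at h
      · left; linarith
    · by_cases hz : z = 0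
      · exact Or.inr (Or.inl hz)
      · right; right
        have h2 : (a13*x + a23*y) * z = 0 := by linarith
        rcases mul_eq_zero.1 h2 with h' | h'
        · exact h'
        · exact absurd h' hz
  · rintro ⟨ht, h | h | h⟩ <;> refine ⟨ht, ?_⟩
    · rw [h]; ring
    · rw [h]; ring
    · have h2 : a13*x*z + a23*y*z = (a13*x + a23*y)*z := by ring
      rw [h2, h]; ring
end

section
/- Let A be the 3×3 matrix with a₃₃ ≠ 0 and all other entries satisfying a₁₁=a₂₂=0, a₁₂=−a₂₁, a₁₃=a₂₃=a₃₁=a₃₂=0. Then X₊h(x,y,z) = 4a₃₃z²(x²+y²+z²+3), and the tangency set on the torus T² = h⁻¹(0) is exactly T² ∩ {z = 0}, i.e., the union of the two circles x²+y²=1 and x²+y²=9 in the plane z=0. -/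
theorem tangency_lemma48
    (a12 a21 a33 : ℝ) (h12 : a12 = -a21) (ha33 : a33 ≠ 0) :
    (∀ x y z : ℝ,
      lieD 0 a12 0 a21 0 0 0 0 a33 x y z = 4*a33*z^2*(x^2 + y^2 + z^2 + 3)) ∧
    (∀ x y z : ℝ, torusFn x y z = 0 →
      (lieD 0 a12 0 a21 0 0 0 0 a33 x y z = 0 ↔ z = 0)) ∧
    (∀ x y z : ℝ,
      (torusFn x y z = 0 ∧ z = 0) ↔
      (z = 0 ∧ (x^2 + y^2 = 1 ∨ x^2 + y^2 = 9))) := by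
  have key : ∀ x y z : ℝ,
      lieD 0 a12 0 a21 0 0 0 0 a33 x y z = 4*a33*z^2*(x^2 + y^2 + z^2 + 3) := by
    intro x y z; simp only [lieD, h12]; ring
  refine ⟨key, ?_, ?_⟩
  · intro x y z _
    rw [key]
    have hpos : (0:ℝ) < x^2 + y^2 + z^2 + 3 := by positivity
    constructor
    · intro h
      have : z^2 = 0 := by
        rcases mul_eq_zero.mp h with h' | h'
        · rcases mul_eq_zero.mp h' with h'' | h''
          · rcases mul_eq_zero.mp h'' with h3 | h3
            · norm_num at h3
            · exact absurd h3 ha33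
          · exact h''
        · exact absurd h' hpos.ne'
      exact pow_eq_zero_iff (by norm_num) |>.mp this
    · intro h; rw [h]; ring
  · intro x y z
    constructor
    · rintro ⟨ht, hz⟩
      refine ⟨hz, ?_⟩
      subst hz
      simp only [torusFn] at ht
      have : (x^2 + y^2 - 1) * (x^2 + y^2 - 9) = 0 := by nlinarith [ht]
      rcases mul_eq_zero.mp this with h | h
      · left; linarith
      · right; linarith
    · rintro ⟨hz, h | h⟩ <;> subst hz <;> constructor <;>
        simp only [torusFn] <;> first | nlinarith [h] | rfl
end

section
/- Let A be a 3×3 matrix with a₃₃=a₁₃=a₂₃=a₃₁=a₃₂=0. Then X₊h(x,y,z) = 4(x²+y²+z²−5)[a₁₁x² + a₂₂y² + (a₁₂+a₂₁)xy], so the tangency set on the torus is the intersection of T² with the union of the sphere x²+y²+z²=5 and the quadric cone a₁₁x² + a₂₂y² + (a₁₂+a₂₁)xy = 0. -/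
theorem tangency_lemma49
    (a11 a12 a21 a22 : ℝ) :
    (∀ x y z : ℝ,
      lieD a11 a12 0 a21 a22 0 0 0 0 x y z =
        4*(x^2 + y^2 + z^2 - 5)*(a11*x^2 + a22*y^2 + (a12 + a21)*x*y)) ∧
    (∀ x y z : ℝ, torusFn x y z = 0 →
      (lieD a11 a12 0 a21 a22 0 0 0 0 x y z = 0 ↔
        (x^2 + y^2 + z^2 = 5 ∨ a11*x^2 + a22*y^2 + (a12 + a21)*x*y = 0))) := by
  have key : ∀ x y z : ℝ,
      lieD a11 a12 0 a21 a22 0 0 0 0 x y z =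
        4*(x^2 + y^2 + z^2 - 5)*(a11*x^2 + a22*y^2 + (a12 + a21)*x*y) := by
    intro x y z; simp only [lieD]; ring
  refine ⟨key, fun x y z _ => ?_⟩
  rw [key]
  constructor
  · intro h
    rcases mul_eq_zero.1 h with h | h
    · rcases mul_eq_zero.1 h with h | h
      · norm_num at h
      · left; linarith
    · right; exact h
  · rintro (h | h)
    · have : x^2 + y^2 + z^2 - 5 = 0 := by linarith
      rw [this]; ring
    · rw [h]; ring
end
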